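/- Let C be the origin, a, b the position vectors of B and A in the plane, and X an interior point of triangle ABC subtending angles ψ_a at segment CB and ψ_b at segment CA, with ψ_a, ψ_b ∈ (π/2, π). The circumcenters of triangles XCB and XCA are r = (1/2)(a + cot ψ_a · a⊥) and s = (1/2)(b − cot ψ_b · b⊥), with circumradii ρ_a = (a/2)√(1 + cot²ψ_a) and ρ_b = (b/2)√(1 + cot²ψ_b), where a = ‖a‖, b = ‖b‖. -/

import Mathlib

open EuclideanGeometry

/-- Counterclockwise rotation by 90° in the Euclidean plane. -/
noncomputable def perp (v : EuclideanSpace ℝ (Fin 2)) : EuclideanSpace ℝ (Fin 2) :=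
  (WithLp.equiv 2 (Fin 2 → ℝ)).symm ![-(v 1), v 0]

open RealInnerProductSpace

private lemma inner_two (u v : EuclideanSpace ℝ (Fin 2)) :
    ⟪u, v⟫ = u 0 * v 0 + u 1 * v 1 := by
  simp [PiLp.inner_apply, Fin.sum_univ_two, mul_comm]

private lemma perp_zero (v : EuclideanSpace ℝ (Fin 2)) : perp v 0 = -(v 1) := by simp [perp]
private lemma perp_one (v : EuclideanSpace ℝ (Fin 2)) : perp v 1 = v 0 := by simp [perp]

private lemma dist_two (x y : EuclideanSpace ℝ (Fin 2)) :
    dist x y = Real.sqrt ((x 0 - y 0)^2 + (x 1 - y 1)^2) := by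
  rw [EuclideanSpace.dist_eq]; simp [Fin.sum_univ_two, Real.dist_eq, sq_abs]

private lemma norm_two (x : EuclideanSpace ℝ (Fin 2)) :
    ‖x‖ = Real.sqrt ((x 0)^2 + (x 1)^2) := by
  rw [EuclideanSpace.norm_eq]; simp [Fin.sum_univ_two, sq_abs]

private lemma key (u v : EuclideanSpace ℝ (Fin 2)) (ψ : ℝ)
    (hψ : InnerProductGeometry.angle u v = ψ) (hsin : 0 < Real.sin ψ) :
    Real.cot ψ * |⟪perp u, v⟫| = ⟪u, v⟫ := by
  have hlag : (⟪u,u⟫ * ⟪v,v⟫ - ⟪u,v⟫ * ⟪u,v⟫ : ℝ) = ⟪perp u, v⟫ ^ 2 := by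
    simp only [inner_two, perp_zero, perp_one]; ring
  have hs := InnerProductGeometry.sin_angle_mul_norm_mul_norm u v
  rw [hψ, hlag, Real.sqrt_sq_eq_abs] at hs
  have hc := InnerProductGeometry.cos_angle u v
  rw [hψ] at hc
  have hN : ⟪u, v⟫ = Real.cos ψ * (‖u‖ * ‖v‖) := by
    rcases eq_or_ne (‖u‖ * ‖v‖) 0 with h | h
    · rcases mul_eq_zero.1 h with h' | h' <;> simp [norm_eq_zero.1 h', h]
    · rw [hc]; field_simp; rw [mul_assoc, mul_div_cancel_right₀ _ h]
  rw [← hs, Real.cot_eq_cos_div_sin, hN]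
  field_simp

private lemma interior_pos {w d X : EuclideanSpace ℝ (Fin 2)} {S : Set (EuclideanSpace ℝ (Fin 2))}
    (hS : ∀ p ∈ S, 0 ≤ ⟪w, p⟫) (hd : 0 < ⟪w, d⟫)
    (hX : X ∈ interior (convexHull ℝ S)) : 0 < ⟪w, X⟫ := by
  have hhull : ∀ y ∈ convexHull ℝ S, 0 ≤ ⟪w, y⟫ := by
    intro y hy
    exact convexHull_min hS (convex_halfSpace_ge
      ⟨fun x y => inner_add_right w x y, fun c x => real_inner_smul_right w x c⟩ 0) hy
  by_contra hle
  push_neg at hle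
  obtain ⟨ε, hε, hball⟩ := Metric.mem_nhds_iff.1 (mem_interior_iff_mem_nhds.1 hX)
  have hdne : d ≠ 0 := by rintro rfl; simp at hd
  have hdn : 0 < ‖d‖ := norm_pos_iff.2 hdne
  set δ := ε / (2 * ‖d‖) with hδ
  have hδpos : 0 < δ := by positivity
  have hy : X - δ • d ∈ convexHull ℝ S := by
    apply hball
    simp only [Metric.mem_ball, dist_eq_norm]
    have h9 : X - δ • d - X = -(δ • d) := by abel
    rw [h9, norm_neg, norm_smul, Real.norm_eq_abs, abs_of_pos hδpos, hδ,
      div_mul_eq_mul_div, div_lt_iff₀ (by positivity)]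
    nlinarith
  have := hhull _ hy
  rw [inner_sub_right, real_inner_smul_right] at this
  nlinarith

/-- Main computational lemma: if the "inscribed angle" relation holds for `v`, `X`, `c`,
then the claimed circumcenter is equidistant from `X`, `0`, `v`. -/
private lemma circ (v X : EuclideanSpace ℝ (Fin 2)) (c : ℝ)
    (hkey : c * (v 0 * X 1 - v 1 * X 0) = X 0 ^ 2 + X 1 ^ 2 - v 0 * X 0 - v 1 * X 1) :
    dist ((1/2 : ℝ) • (v + c • perp v)) X = ‖v‖ / 2 * Real.sqrt (1 + c ^ 2) ∧
    dist ((1/2 : ℝ) • (v + c • perp v)) 0 = ‖v‖ / 2 * Real.sqrt (1 + c ^ 2) ∧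
    dist ((1/2 : ℝ) • (v + c • perp v)) v = ‖v‖ / 2 * Real.sqrt (1 + c ^ 2) := by
  have hρ : ‖v‖ / 2 * Real.sqrt (1 + c ^ 2)
      = Real.sqrt (((v 0) ^ 2 + (v 1) ^ 2) * (1 + c ^ 2) / 4) := by
    have h1 : (0 : ℝ) ≤ ‖v‖ / 2 * Real.sqrt (1 + c ^ 2) := by positivity
    rw [← Real.sqrt_sq h1]
    congr 1
    rw [mul_pow, div_pow, Real.sq_sqrt (by positivity), norm_two,
      Real.sq_sqrt (by positivity)]
    ring
  have hc0 : ((1/2 : ℝ) • (v + c • perp v)) 0 = (v 0 + c * (-(v 1))) / 2 := by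
    simp [perp_zero]; ring
  have hc1 : ((1/2 : ℝ) • (v + c • perp v)) 1 = (v 1 + c * v 0) / 2 := by
    simp [perp_one]; ring
  refine ⟨?_, ?_, ?_⟩ <;> rw [dist_two, hρ, hc0, hc1] <;> congr 1
  · linear_combination -hkey
  · simp only [show ((0 : EuclideanSpace ℝ (Fin 2)) 0 : ℝ) = 0 from rfl,
      show ((0 : EuclideanSpace ℝ (Fin 2)) 1 : ℝ) = 0 from rfl]
    ring
  · ring

theorem circumcenters_formula (a b X : EuclideanSpace ℝ (Fin 2)) (ψa ψb : ℝ)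
    (hab : LinearIndependent ℝ ![a, b])
    (horient : 0 < (inner ℝ (perp a) b : ℝ))
    (hX : X ∈ interior (convexHull ℝ {(0 : EuclideanSpace ℝ (Fin 2)), a, b}))
    (hψa : ∠ a X (0 : EuclideanSpace ℝ (Fin 2)) = ψa)
    (hψb : ∠ (0 : EuclideanSpace ℝ (Fin 2)) X b = ψb)
    (hψa1 : Real.pi / 2 < ψa) (hψa2 : ψa < Real.pi)
    (hψb1 : Real.pi / 2 < ψb) (hψb2 : ψb < Real.pi) :
    let r := (1 / 2 : ℝ) • (a + Real.cot ψa • perp a)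
    let s := (1 / 2 : ℝ) • (b - Real.cot ψb • perp b)
    let ρa := ‖a‖ / 2 * Real.sqrt (1 + Real.cot ψa ^ 2)
    let ρb := ‖b‖ / 2 * Real.sqrt (1 + Real.cot ψb ^ 2)
    dist r X = ρa ∧ dist r (0 : EuclideanSpace ℝ (Fin 2)) = ρa ∧ dist r a = ρa ∧
    dist s X = ρb ∧ dist s (0 : EuclideanSpace ℝ (Fin 2)) = ρb ∧ dist s b = ρb := by
  intro r s ρa ρb
  -- positivity of the cross products with X
  have hpos : 0 < ⟪perp a, X⟫ := by
    refine interior_pos ?_ horient hX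
    rintro p (rfl | rfl | rfl)
    · simp
    · simp only [inner_two, perp_zero, perp_one]; nlinarith
    · exact le_of_lt horient
  have hneg : 0 < ⟪-perp b, X⟫ := by
    refine interior_pos (d := a) ?_ ?_ hX
    · rintro p (rfl | rfl | rfl)
      · simp
      · have h := horient
        simp only [inner_two, perp_zero, perp_one] at h
        simp only [inner_neg_left, inner_two, perp_zero, perp_one]
        nlinarith [h]
      · simp only [inner_neg_left, inner_two, perp_zero, perp_one]; nlinarith
    · have h := horient
      simp only [inner_two, perp_zero, perp_one] at h
      simp only [inner_neg_left, inner_two, perp_zero, perp_one]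
      nlinarith [h]
  simp only [inner_two, perp_zero, perp_one] at hpos
  simp only [inner_neg_left, inner_two, perp_zero, perp_one] at hneg
  -- sines are positive
  have hsa : 0 < Real.sin ψa :=
    Real.sin_pos_of_pos_of_lt_pi (lt_trans (by positivity) hψa1) hψa2
  have hsb : 0 < Real.sin ψb :=
    Real.sin_pos_of_pos_of_lt_pi (lt_trans (by positivity) hψb1) hψb2
  -- the key scalar relations
  have hA : InnerProductGeometry.angle (a - X) ((0 : EuclideanSpace ℝ (Fin 2)) - X) = ψa := by
    rw [← hψa]; simp [EuclideanGeometry.angle, vsub_eq_sub]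
  have hB : InnerProductGeometry.angle ((0 : EuclideanSpace ℝ (Fin 2)) - X) (b - X) = ψb := by
    rw [← hψb]; simp [EuclideanGeometry.angle, vsub_eq_sub]
  have hkA := key _ _ _ hA hsa
  have hkB := key _ _ _ hB hsb
  have habsA : |⟪perp (a - X), (0 : EuclideanSpace ℝ (Fin 2)) - X⟫|
      = a 0 * X 1 - a 1 * X 0 := by
    have h1 : ⟪perp (a - X), (0 : EuclideanSpace ℝ (Fin 2)) - X⟫
        = -(a 0 * X 1 - a 1 * X 0) := by
      simp only [inner_two, perp_zero, perp_one, PiLp.sub_apply]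
      simp; ring
    rw [h1, abs_neg, abs_of_pos (by nlinarith)]
  have habsB : |⟪perp ((0 : EuclideanSpace ℝ (Fin 2)) - X), b - X⟫|
      = b 1 * X 0 - b 0 * X 1 := by
    have h1 : ⟪perp ((0 : EuclideanSpace ℝ (Fin 2)) - X), b - X⟫
        = -(b 1 * X 0 - b 0 * X 1) := by
      simp only [inner_two, perp_zero, perp_one, PiLp.sub_apply]
      simp; ring
    rw [h1, abs_neg, abs_of_pos (by nlinarith)]
  rw [habsA] at hkA
  rw [habsB] at hkB
  simp only [inner_two, PiLp.sub_apply] at hkA hkB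
  simp only [show ((0 : EuclideanSpace ℝ (Fin 2)) 0 : ℝ) = 0 from rfl,
    show ((0 : EuclideanSpace ℝ (Fin 2)) 1 : ℝ) = 0 from rfl] at hkA hkB
  -- apply the computational lemma
  have hca := circ a X (Real.cot ψa) (by linear_combination hkA)
  have hcb := circ b X (-Real.cot ψb) (by linear_combination hkB)
  have hsb2 : b - Real.cot ψb • perp b = b + (-Real.cot ψb) • perp b := by
    rw [neg_smul, sub_eq_add_neg]
  have hρb2 : Real.sqrt (1 + Real.cot ψb ^ 2) = Real.sqrt (1 + (-Real.cot ψb) ^ 2) := by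
    congr 1; ring
  refine ⟨hca.1, hca.2.1, hca.2.2, ?_, ?_, ?_⟩
  · show dist ((1 / 2 : ℝ) • (b - Real.cot ψb • perp b)) X
      = ‖b‖ / 2 * Real.sqrt (1 + Real.cot ψb ^ 2)
    rw [hsb2, hρb2]; exact hcb.1
  · show dist ((1 / 2 : ℝ) • (b - Real.cot ψb • perp b)) 0
      = ‖b‖ / 2 * Real.sqrt (1 + Real.cot ψb ^ 2)
    rw [hsb2, hρb2]; exact hcb.2.1
  · show dist ((1 / 2 : ℝ) • (b - Real.cot ψb • perp b)) b
      = ‖b‖ / 2 * Real.sqrt (1 + Real.cot ψb ^ 2)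
    rw [hsb2, hρb2]; exact hcb.2.2
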